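/- For n ≥ 1, define f_p ∈ R^n for 1 ≤ p ≤ n+1 by: f_p = √((n+1)/n) · (0,...,0, -(p-1)/√((p-1)p), 1/√(p(p+1)), ..., 1/√(n(n+1))) (with p-2 leading zeros, and where for p = 1 the entry -(p-1)/√((p-1)p) is absent so f_1 = √((n+1)/n)(1/√2, 1/√6, ..., 1/√(n(n+1)))). Then (f_1,...,f_{n+1}) is a spherical tight frame for R^n, and ⟨f_p, f_q⟩ = -1/n for all p ≠ q. -/

import Mathlib

open Finset

noncomputable def ee (p i : ℕ) : ℝ :=
  if i + 1 < p then 0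
  else if i + 1 = p then -(p : ℝ) / Real.sqrt ((p : ℝ) * ((p : ℝ) + 1))
  else 1 / Real.sqrt (((i : ℝ) + 1) * ((i : ℝ) + 2))

lemma ee_lt {p i : ℕ} (h : i + 1 < p) : ee p i = 0 := by simp [ee, h]

lemma ee_eq {p i : ℕ} (h : i + 1 = p) :
    ee p i = -(p : ℝ) / Real.sqrt ((p : ℝ) * ((p : ℝ) + 1)) := by
  simp [ee, h]

lemma ee_ge {p i : ℕ} (h : p ≤ i) :
    ee p i = 1 / Real.sqrt (((i : ℝ) + 1) * ((i : ℝ) + 2)) := by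
  have h1 : ¬ i + 1 < p := by omega
  have h2 : ¬ i + 1 = p := by omega
  simp [ee, h1, h2]

lemma sqrt_sq' (m : ℕ) :
    Real.sqrt ((m : ℝ) * ((m : ℝ) + 1)) * Real.sqrt ((m : ℝ) * ((m : ℝ) + 1))
      = (m : ℝ) * ((m : ℝ) + 1) := by
  exact Real.mul_self_sqrt (by positivity)

lemma sqrt_pos' {m : ℕ} (hm : 1 ≤ m) :
    0 < Real.sqrt ((m : ℝ) * ((m : ℝ) + 1)) := by
  apply Real.sqrt_pos.2
  have : (1:ℝ) ≤ (m:ℝ) := by exact_mod_cast hm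
  nlinarith

lemma tele : ∀ (n m : ℕ), m ≤ n →
    ∑ i ∈ Ico m n, (1:ℝ)/(((i:ℝ)+1)*((i:ℝ)+2)) = 1/((m:ℝ)+1) - 1/((n:ℝ)+1) := by
  intro n
  induction n with
  | zero => intro m hm; interval_cases m; simp
  | succ n ih =>
    intro m hm
    rcases eq_or_lt_of_le hm with rfl | h
    · simp
    · rw [Finset.sum_Ico_succ_top (by omega), ih m (by omega)]
      have h1 : ((n:ℝ)+1) ≠ 0 := by positivity
      have h2 : ((n:ℝ)+2) ≠ 0 := by positivity
      have h3 : ((m:ℝ)+1) ≠ 0 := by positivity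
      push_cast
      field_simp
      ring

lemma ee_ge_sq {p q i : ℕ} (hp : p ≤ i) (hq : q ≤ i) :
    ee p i * ee q i = 1/(((i:ℝ)+1)*((i:ℝ)+2)) := by
  rw [ee_ge hp, ee_ge hq, div_mul_div_comm, one_mul,
    Real.mul_self_sqrt (by positivity)]

lemma rowDiag (n p : ℕ) (hp : p ≤ n) :
    ∑ i ∈ range n, ee p i * ee p i = (n:ℝ)/((n:ℝ)+1) := by
  have hn1 : ((n:ℝ)+1) ≠ 0 := by positivity
  rcases p with _ | r
  · rw [range_eq_Ico,
      Finset.sum_congr rfl (fun i _ => ee_ge_sq (Nat.zero_le i) (Nat.zero_le i)),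
      tele n 0 (Nat.zero_le n)]
    push_cast
    field_simp
    ring
  · have h1 : r + 1 ≤ n := hp
    rw [range_eq_Ico, ← Finset.sum_Ico_consecutive _ (Nat.zero_le (r+1)) h1,
        ← Finset.sum_Ico_consecutive _ (Nat.zero_le r) (Nat.le_succ r)]
    have e1 : ∑ i ∈ Ico 0 r, ee (r+1) i * ee (r+1) i = 0 := by
      apply Finset.sum_eq_zero
      intro i hi
      have : i + 1 < r + 1 := by simp at hi; omega
      rw [ee_lt this, zero_mul]
    have e2 : ∑ i ∈ Ico r (r+1), ee (r+1) i * ee (r+1) i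
        = ((r:ℝ)+1)/((r:ℝ)+2) := by
      rw [Finset.sum_Ico_succ_top (le_refl r), Finset.Ico_self, Finset.sum_empty,
        zero_add, ee_eq rfl]
      have hs := sqrt_sq' (r+1)
      have hpos := sqrt_pos' (m := r+1) (by omega)
      push_cast at hs hpos ⊢
      rw [div_mul_div_comm, neg_mul_neg]
      rw [hs]
      have h2 : ((r:ℝ)+1) ≠ 0 := by positivity
      have h3 : ((r:ℝ)+1+1) ≠ 0 := by positivity
      field_simp
      ring
    have e3 : ∑ i ∈ Ico (r+1) n, ee (r+1) i * ee (r+1) i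
        = 1/((r:ℝ)+2) - 1/((n:ℝ)+1) := by
      rw [Finset.sum_congr rfl (fun i hi => by
        have : r + 1 ≤ i := (Finset.mem_Ico.1 hi).1
        exact ee_ge_sq this this), tele n (r+1) h1]
      push_cast
      ring
    rw [e1, e2, e3]
    have h2 : ((r:ℝ)+2) ≠ 0 := by positivity
    field_simp
    ring

lemma rowOff (n p q : ℕ) (hpq : p < q) (hq : q ≤ n) :
    ∑ i ∈ range n, ee p i * ee q i = -1/((n:ℝ)+1) := by
  obtain ⟨r, rfl⟩ : ∃ r, q = r + 1 := ⟨q-1, by omega⟩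
  have h1 : r + 1 ≤ n := hq
  rw [range_eq_Ico, ← Finset.sum_Ico_consecutive _ (Nat.zero_le (r+1)) h1,
      ← Finset.sum_Ico_consecutive _ (Nat.zero_le r) (Nat.le_succ r)]
  have e1 : ∑ i ∈ Ico 0 r, ee p i * ee (r+1) i = 0 := by
    apply Finset.sum_eq_zero
    intro i hi
    have : i + 1 < r + 1 := by simp at hi; omega
    rw [ee_lt this, mul_zero]
  have e2 : ∑ i ∈ Ico r (r+1), ee p i * ee (r+1) i = -1/((r:ℝ)+2) := by
    rw [Finset.sum_Ico_succ_top (le_refl r), Finset.Ico_self, Finset.sum_empty,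
      zero_add, ee_eq rfl, ee_ge (show p ≤ r by omega)]
    have hs := sqrt_sq' (r+1)
    have hpos := sqrt_pos' (m := r+1) (by omega)
    push_cast at hs hpos ⊢
    rw [show ((r:ℝ)+1+1) = (r:ℝ)+2 from by ring] at hs hpos ⊢
    rw [div_mul_div_comm, one_mul, hs]
    have h2 : ((r:ℝ)+1) ≠ 0 := by positivity
    have h3 : ((r:ℝ)+2) ≠ 0 := by positivity
    field_simp
  have e3 : ∑ i ∈ Ico (r+1) n, ee p i * ee (r+1) i
      = 1/((r:ℝ)+2) - 1/((n:ℝ)+1) := by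
    rw [Finset.sum_congr rfl (fun i hi => by
      have hri : r + 1 ≤ i := (Finset.mem_Ico.1 hi).1
      exact ee_ge_sq (by omega) hri), tele n (r+1) h1]
    push_cast
    ring
  rw [e1, e2, e3]
  ring

lemma colDiag (n j : ℕ) (hj : j < n) :
    ∑ p ∈ range (n+1), ee p j * ee p j = 1 := by
  have h1 : j + 2 ≤ n + 1 := by omega
  rw [range_eq_Ico, ← Finset.sum_Ico_consecutive _ (Nat.zero_le (j+2)) h1,
      ← Finset.sum_Ico_consecutive _ (Nat.zero_le (j+1)) (Nat.le_succ (j+1))]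
  have hs := sqrt_sq' (j+1)
  have hpos := sqrt_pos' (m := j+1) (by omega)
  push_cast at hs hpos
  rw [show ((j:ℝ)+1+1) = (j:ℝ)+2 from by ring] at hs hpos
  have e1 : ∑ p ∈ Ico 0 (j+1), ee p j * ee p j
      = ((j:ℝ)+1) * (1/(((j:ℝ)+1)*((j:ℝ)+2))) := by
    rw [Finset.sum_congr rfl (fun p hp => by
      have : p ≤ j := by simp at hp; omega
      exact ee_ge_sq this this)]
    rw [Finset.sum_const, Nat.card_Ico, nsmul_eq_mul]
    push_cast
    ring_nf
  have e2 : ∑ p ∈ Ico (j+1) (j+2), ee p j * ee p j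
      = ((j:ℝ)+1)/((j:ℝ)+2) := by
    rw [Finset.sum_Ico_succ_top (le_refl (j+1)), Finset.Ico_self,
      Finset.sum_empty, zero_add, ee_eq rfl]
    push_cast
    rw [show ((j:ℝ)+1+1) = (j:ℝ)+2 from by ring]
    rw [div_mul_div_comm, neg_mul_neg, hs]
    have h2 : ((j:ℝ)+1) ≠ 0 := by positivity
    have h3 : ((j:ℝ)+2) ≠ 0 := by positivity
    field_simp
  have e3 : ∑ p ∈ Ico (j+2) (n+1), ee p j * ee p j = 0 := by
    apply Finset.sum_eq_zero
    intro p hp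
    have : j + 1 < p := by simp at hp; omega
    rw [ee_lt this, zero_mul]
  rw [e1, e2, e3]
  have h2 : ((j:ℝ)+1) ≠ 0 := by positivity
  have h3 : ((j:ℝ)+2) ≠ 0 := by positivity
  field_simp
  ring

lemma colOff (n j k : ℕ) (hjk : j < k) (hk : k < n) :
    ∑ p ∈ range (n+1), ee p j * ee p k = 0 := by
  have h1 : j + 2 ≤ n + 1 := by omega
  rw [range_eq_Ico, ← Finset.sum_Ico_consecutive _ (Nat.zero_le (j+2)) h1,
      ← Finset.sum_Ico_consecutive _ (Nat.zero_le (j+1)) (Nat.le_succ (j+1))]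
  set sA := Real.sqrt (((j:ℝ)+1)*((j:ℝ)+2)) with hsA
  set sB := Real.sqrt (((k:ℝ)+1)*((k:ℝ)+2)) with hsB
  have e1 : ∑ p ∈ Ico 0 (j+1), ee p j * ee p k
      = ((j:ℝ)+1) * (1/sA * (1/sB)) := by
    rw [Finset.sum_congr rfl (fun p hp => by
      have hpj : p ≤ j := by simp at hp; omega
      rw [ee_ge hpj, ee_ge (show p ≤ k by omega)])]
    rw [Finset.sum_const, Nat.card_Ico, nsmul_eq_mul]
    push_cast
    ring
  have e2 : ∑ p ∈ Ico (j+1) (j+2), ee p j * ee p k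
      = -(((j:ℝ)+1)) * (1/sA * (1/sB)) := by
    rw [Finset.sum_Ico_succ_top (le_refl (j+1)), Finset.Ico_self,
      Finset.sum_empty, zero_add, ee_eq rfl, ee_ge (show j+1 ≤ k by omega)]
    push_cast
    rw [show ((j:ℝ)+1+1) = (j:ℝ)+2 from by ring, ← hsA]
    ring
  have e3 : ∑ p ∈ Ico (j+2) (n+1), ee p j * ee p k = 0 := by
    apply Finset.sum_eq_zero
    intro p hp
    have : j + 1 < p := by simp at hp; omega
    rw [ee_lt this, zero_mul]
  rw [e1, e2, e3]
  ring

/-- The explicit vectors `f_p ∈ ℝⁿ` (`1 ≤ p ≤ n+1`), where the `i`-th coordinate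
(1-indexed) of `f_p` is `√((n+1)/n)` times `0` if `i < p - 1`, `-(p-1)/√((p-1)p)` if
`i = p - 1`, and `1/√(i(i+1))` if `i ≥ p`, form a spherical tight frame for `ℝⁿ`, and
`⟨f_p, f_q⟩ = -1/n` for all `p ≠ q`. -/
theorem stmt11 (n : ℕ) (hn : 1 ≤ n)
    (f : Fin (n + 1) → EuclideanSpace ℝ (Fin n))
    (hf : ∀ (p : Fin (n + 1)) (i : Fin n),
      f p i = Real.sqrt (((n : ℝ) + 1) / n) *
        (if (i : ℕ) + 1 < (p : ℕ) then 0
         else if (i : ℕ) + 1 = (p : ℕ) then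
           -(p : ℝ) / Real.sqrt ((p : ℕ) * ((p : ℕ) + 1))
         else 1 / Real.sqrt (((i : ℕ) + 1) * ((i : ℕ) + 2)))) :
    (∀ p, ‖f p‖ = 1) ∧
    (∀ v : EuclideanSpace ℝ (Fin n),
      ∑ p, (inner ℝ v (f p) : ℝ) ^ 2 = (((n : ℝ) + 1) / n) * ‖v‖ ^ 2) ∧
    (∀ p q, p ≠ q → (inner ℝ (f p) (f q) : ℝ) = -1 / n) := by
  have hn0 : (n:ℝ) ≠ 0 := by positivity
  have hn1 : ((n:ℝ)+1) ≠ 0 := by positivity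
  set c := Real.sqrt (((n : ℝ) + 1) / n) with hc
  have hc2 : c * c = ((n:ℝ)+1)/n := Real.mul_self_sqrt (by positivity)
  have hfe : ∀ (p : Fin (n+1)) (i : Fin n), f p i = c * ee (p:ℕ) (i:ℕ) := by
    intro p i
    rw [hf]
    unfold ee
    push_cast
    rfl
  have hinner : ∀ p q : Fin (n+1), (inner ℝ (f p) (f q) : ℝ)
      = (((n:ℝ)+1)/n) * ∑ i ∈ range n, ee (p:ℕ) i * ee (q:ℕ) i := by
    intro p q
    rw [PiLp.inner_apply]
    simp only [RCLike.inner_apply, conj_trivial, hfe]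
    rw [Finset.sum_congr rfl fun i _ => mul_comm _ _]
    rw [show ∑ i : Fin n, (c * ee (p:ℕ) (i:ℕ)) * (c * ee (q:ℕ) (i:ℕ))
        = (c*c) * ∑ i : Fin n, ee (p:ℕ) (i:ℕ) * ee (q:ℕ) (i:ℕ) from by
      rw [Finset.mul_sum]; exact Finset.sum_congr rfl fun i _ => by ring]
    rw [hc2, Fin.sum_univ_eq_sum_range (fun i => ee (p:ℕ) i * ee (q:ℕ) i)]
  have hinner_diag : ∀ p : Fin (n+1), (inner ℝ (f p) (f p) : ℝ) = 1 := by
    intro p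
    rw [hinner p p, rowDiag n p (by omega)]
    field_simp
  refine ⟨?_, ?_, ?_⟩
  · intro p
    have h := hinner_diag p
    rw [real_inner_self_eq_norm_mul_norm] at h
    have h2 := norm_nonneg (f p)
    nlinarith
  · intro v
    have hcol : ∀ i j : Fin n, ∑ p : Fin (n+1), f p i * f p j
        = if i = j then ((n:ℝ)+1)/n else 0 := by
      intro i j
      have key : ∑ p : Fin (n+1), f p i * f p j
          = (((n:ℝ)+1)/n) * ∑ p ∈ range (n+1), ee p (i:ℕ) * ee p (j:ℕ) := by
        simp only [hfe]
        rw [show ∑ p : Fin (n+1), (c * ee (p:ℕ) (i:ℕ)) * (c * ee (p:ℕ) (j:ℕ))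
            = (c*c) * ∑ p : Fin (n+1), ee (p:ℕ) (i:ℕ) * ee (p:ℕ) (j:ℕ) from by
          rw [Finset.mul_sum]; exact Finset.sum_congr rfl fun p _ => by ring]
        rw [hc2, Fin.sum_univ_eq_sum_range (fun p => ee p (i:ℕ) * ee p (j:ℕ))]
      rcases lt_trichotomy (i:ℕ) (j:ℕ) with h | h | h
      · rw [key, colOff n i j h j.isLt, mul_zero, if_neg (by
          intro hij; rw [hij] at h; omega)]
      · have hij : i = j := Fin.ext h
        rw [key, hij, colDiag n j j.isLt, mul_one, if_pos rfl]
      · rw [key, Finset.sum_congr rfl (fun p _ => mul_comm _ _),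
          colOff n j i h i.isLt, mul_zero, if_neg (by
          intro hij; rw [hij] at h; omega)]
    have hv : ∀ p : Fin (n+1), (inner ℝ v (f p) : ℝ) = ∑ i : Fin n, v i * f p i := by
      intro p
      rw [PiLp.inner_apply]
      simp only [RCLike.inner_apply, conj_trivial]
      exact Finset.sum_congr rfl fun i _ => mul_comm _ _
    calc ∑ p, (inner ℝ v (f p) : ℝ) ^ 2
        = ∑ p : Fin (n+1), ∑ i : Fin n, ∑ j : Fin n,
            (v i * f p i) * (v j * f p j) := by
          refine Finset.sum_congr rfl fun p _ => ?_
          rw [hv p, sq, Finset.sum_mul_sum]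
      _ = ∑ i : Fin n, ∑ j : Fin n, ∑ p : Fin (n+1),
            (v i * f p i) * (v j * f p j) := by
          rw [Finset.sum_comm]
          exact Finset.sum_congr rfl fun i _ => Finset.sum_comm
      _ = ∑ i : Fin n, ∑ j : Fin n,
            v i * v j * (if i = j then ((n:ℝ)+1)/n else 0) := by
          refine Finset.sum_congr rfl fun i _ => Finset.sum_congr rfl fun j _ => ?_
          rw [← hcol i j, Finset.mul_sum]
          exact Finset.sum_congr rfl fun p _ => by ring
      _ = ∑ i : Fin n, v i * v i * (((n:ℝ)+1)/n) := by
          refine Finset.sum_congr rfl fun i _ => ?_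
          simp [mul_ite, mul_zero]
      _ = (((n : ℝ) + 1) / n) * ‖v‖ ^ 2 := by
          rw [← Finset.sum_mul, mul_comm]
          congr 1
          rw [← real_inner_self_eq_norm_sq, PiLp.inner_apply]
          simp only [RCLike.inner_apply, conj_trivial]
  · intro p q hpq
    rcases lt_trichotomy (p:ℕ) (q:ℕ) with h | h | h
    · rw [hinner p q, rowOff n p q h (by omega)]
      field_simp
    · exact absurd (Fin.ext h) hpq
    · rw [hinner p q, Finset.sum_congr rfl (fun i _ => mul_comm _ _),
        rowOff n q p h (by omega)]
      field_simp
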